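/- Let f : X → X be a homeomorphism of a compact metric space and S a periodic orbit of f. If f is expansive on B_b(S) for some b > 0, then S is locally maximal: there is r > 0 with S = ⋂_{i∈ℤ} f^i(B_r(S)). -/

import Mathlib

open Metric Filter Function Set

variable {X : Type*} [MetricSpace X]

/-- A δ-chain of length ≥ 1 from x to y. -/
def IsChain' (f : X → X) (δ : ℝ) (x y : X) : Prop :=
  ∃ k : ℕ, 1 ≤ k ∧ ∃ c : ℕ → X, c 0 = x ∧ c k = y ∧ ∀ i < k, dist (f (c i)) (c (i + 1)) ≤ δ

/-- The chain recurrent set. -/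
def CR (f : X → X) : Set X := {x | ∀ δ > 0, IsChain' f δ x x}

/-- Sensitive points of f restricted to S. -/
def SenOn (f : X → X) (S : Set X) : Set X :=
  {x | x ∈ S ∧ ∃ a > 0, ∀ δ > 0, ∃ y ∈ S, dist x y ≤ δ ∧ ∃ i : ℕ, a < dist (f^[i] x) (f^[i] y)}

/-- Equicontinuity of a map (uniform over all forward iterates). -/
def Equicont (f : X → X) : Prop :=
  ∀ ε > 0, ∃ δ > 0, ∀ z w : X, dist z w ≤ δ → ∀ i : ℕ, dist (f^[i] z) (f^[i] w) ≤ ε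

/-- The i-th iterate (i ∈ ℤ) of a homeomorphism. -/
def ziter (f : X ≃ₜ X) (i : ℤ) : X → X :=
  fun x => if 0 ≤ i then (⇑f)^[i.toNat] x else (⇑f.symm)^[(-i).toNat] x

/-- Expansiveness of a homeomorphism. -/
def Expansive (f : X ≃ₜ X) : Prop :=
  ∃ e > 0, ∀ x y : X, (∀ i : ℤ, dist (ziter f i x) (ziter f i y) ≤ e) → x = y

/-- e is an expansive constant for f on S. -/
def ExpConstOn (f : X ≃ₜ X) (S : Set X) (e : ℝ) : Prop :=
  ∀ x y : X, (∀ i : ℤ, ziter f i x ∈ S) → (∀ i : ℤ, ziter f i y ∈ S) →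
    (∀ i : ℤ, dist (ziter f i x) (ziter f i y) ≤ e) → x = y

/-- Periodic points. -/
def Per (f : X → X) : Set X := {x | ∃ j : ℕ, 1 ≤ j ∧ f^[j] x = x}

/-- Closed r-neighborhood of a set. -/
def nbd (r : ℝ) (S : Set X) : Set X := {y | infDist y S ≤ r}


section Aux

lemma zit_zero (f : X ≃ₜ X) (x : X) : ziter f 0 x = x := by simp [ziter]

lemma zit_succ (f : X ≃ₜ X) (i : ℤ) (x : X) : ziter f (i+1) x = f (ziter f i x) := by
  rcases le_or_gt 0 i with h | h
  · have h2 : (0:ℤ) ≤ i + 1 := by omega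
    have h3 : (i+1).toNat = i.toNat + 1 := by omega
    simp only [ziter, if_pos h, if_pos h2, h3, Function.iterate_succ_apply']
  · have h4 : ¬ (0:ℤ) ≤ i := by omega
    rcases eq_or_lt_of_le (show i + 1 ≤ 0 by omega) with h1 | h1
    · have : i = -1 := by omega
      subst this
      simp [ziter]
    · have h5 : ¬ (0:ℤ) ≤ i + 1 := by omega
      have h6 : (-i).toNat = (-(i+1)).toNat + 1 := by omega
      simp only [ziter, if_neg h4, if_neg h5, h6]
      rw [Function.iterate_succ_apply', Homeomorph.apply_symm_apply]

lemma zit_pred (f : X ≃ₜ X) (i : ℤ) (x : X) : ziter f (i-1) x = f.symm (ziter f i x) := by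
  have := zit_succ f (i-1) x
  rw [sub_add_cancel] at this
  rw [this]; simp

lemma exists_sep {S : Set X} (hfin : S.Finite) :
    ∃ m > 0, ∀ a ∈ S, ∀ b ∈ S, dist a b < m → a = b := by
  classical
  set t := hfin.toFinset with ht
  set F := (t ×ˢ t).filter (fun q => q.1 ≠ q.2) with hF
  rcases F.eq_empty_or_nonempty with h | h
  · refine ⟨1, one_pos, fun a ha b hb _ => ?_⟩
    by_contra hne
    have : (a, b) ∈ F := by
      simp [hF, Finset.mem_filter, Finset.mem_product, ht, hfin.mem_toFinset, ha, hb, hne]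
    rw [h] at this; exact absurd this (Finset.notMem_empty _)
  · refine ⟨F.inf' h (fun q => dist q.1 q.2), ?_, fun a ha b hb hd => ?_⟩
    · obtain ⟨q, hq, hmin⟩ := F.exists_mem_eq_inf' h (fun q => dist q.1 q.2)
      rw [hmin]
      simp only [hF, Finset.mem_filter] at hq
      exact dist_pos.2 hq.2
    · by_contra hne
      have hab : (a, b) ∈ F := by
        simp [hF, Finset.mem_filter, Finset.mem_product, ht, hfin.mem_toFinset, ha, hb, hne]
      exact absurd hd (not_lt.2 (Finset.inf'_le _ hab))

lemma unif_cont [CompactSpace X] (g : X → X) (hg : Continuous g) {ε : ℝ} (hε : 0 < ε) :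
    ∃ δ > 0, ∀ z w : X, dist z w ≤ δ → dist (g z) (g w) ≤ ε := by
  obtain ⟨δ, hδ, H⟩ := Metric.uniformContinuous_iff.1
    (CompactSpace.uniformContinuous_of_continuous hg) ε hε
  exact ⟨δ/2, by positivity, fun z w h => le_of_lt (H (lt_of_le_of_lt h (by linarith)))⟩

end Aux

theorem stmt_11 [CompactSpace X] (f : X ≃ₜ X) (S : Set X)
    (horb : ∃ (p : X) (j : ℕ), 1 ≤ j ∧ (⇑f)^[j] p = p ∧ S = {x | ∃ i < j, (⇑f)^[i] p = x})
    (hexp : ∃ b > 0, ∃ e > 0, ExpConstOn f (nbd b S) e) :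
    ∃ r > 0, S = {x : X | ∀ i : ℤ, ziter f i x ∈ nbd r S} := by
  classical
  obtain ⟨p, j, hj, hpj, hS⟩ := horb
  obtain ⟨b, hb, e, he, hexp⟩ := hexp
  have hpS : p ∈ S := by rw [hS]; exact ⟨0, hj, rfl⟩
  have hfin : S.Finite := by
    rw [hS]
    have : {x | ∃ i < j, (⇑f)^[i] p = x} = (fun i => (⇑f)^[i] p) '' (Set.Iio j) := by
      ext x
      simp only [Set.mem_image, Set.mem_Iio, Set.mem_setOf_eq]
    rw [this]
    exact (Set.finite_Iio j).image _
  have hmaps : ∀ x ∈ S, f x ∈ S := by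
    intro x hx
    rw [hS] at hx ⊢
    obtain ⟨i, hi, rfl⟩ := hx
    rcases lt_or_eq_of_le (Nat.succ_le_of_lt hi) with h | h
    · exact ⟨i + 1, h, Function.iterate_succ_apply' (⇑f) i p⟩
    · refine ⟨0, hj, ?_⟩
      have h2 : f ((⇑f)^[i] p) = (⇑f)^[i+1] p := (Function.iterate_succ_apply' (⇑f) i p).symm
      rw [h2, show i + 1 = j by omega, hpj]
      rfl
  have hsymm : ∀ x ∈ S, f.symm x ∈ S := by
    intro x hx
    rw [hS] at hx ⊢
    obtain ⟨i, hi, rfl⟩ := hx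
    rcases Nat.eq_zero_or_pos i with h | h
    · subst h
      refine ⟨j - 1, by omega, ?_⟩
      have h1 : p = f ((⇑f)^[j-1] p) := by
        conv_lhs => rw [← hpj, show j = (j-1)+1 by omega, Function.iterate_succ_apply']
      show (⇑f)^[j-1] p = f.symm ((⇑f)^[0] p)
      conv_rhs => rw [Function.iterate_zero_apply, h1, Homeomorph.symm_apply_apply]
    · refine ⟨i - 1, by omega, ?_⟩
      have h1 : (⇑f)^[i] p = f ((⇑f)^[i-1] p) := by
        conv_lhs => rw [show i = (i-1)+1 by omega, Function.iterate_succ_apply']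
      rw [h1, Homeomorph.symm_apply_apply]
  have hziterS : ∀ y ∈ S, ∀ i : ℤ, ziter f i y ∈ S := by
    intro y hy i
    induction i using Int.induction_on with
    | zero => rw [zit_zero]; exact hy
    | succ n ih => rw [zit_succ]; exact hmaps _ ih
    | pred n ih =>
        rw [show (-(n:ℤ) - 1) = (-(n:ℤ)) - 1 from rfl, zit_pred]
        exact hsymm _ ih
  obtain ⟨m, hm, hsep⟩ := exists_sep hfin
  obtain ⟨δ1, hδ1, H1⟩ := unif_cont (⇑f) f.continuous (show (0:ℝ) < m/2 by linarith)
  obtain ⟨δ2, hδ2, H2⟩ := unif_cont (⇑f.symm) f.symm.continuous (show (0:ℝ) < m/2 by linarith)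
  set r : ℝ := min (min b e) (min (m/3) (min δ1 δ2)) with hr
  have hr0 : 0 < r := by
    simp only [hr, lt_min_iff]
    refine ⟨⟨hb, he⟩, by linarith, hδ1, hδ2⟩
  have hrb : r ≤ b := le_trans (min_le_left _ _) (min_le_left _ _)
  have hre : r ≤ e := le_trans (min_le_left _ _) (min_le_right _ _)
  have hrm : r ≤ m/3 := le_trans (min_le_right _ _) (min_le_left _ _)
  have hrδ1 : r ≤ δ1 := le_trans (min_le_right _ _) (le_trans (min_le_right _ _) (min_le_left _ _))
  have hrδ2 : r ≤ δ2 := le_trans (min_le_right _ _) (le_trans (min_le_right _ _) (min_le_right _ _))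
  have hnear : ∀ z : X, infDist z S ≤ r → ∃ s ∈ S, dist z s ≤ r := by
    intro z hz
    obtain ⟨s, hsS, hsd⟩ := hfin.isCompact.exists_infDist_eq_dist ⟨p, hpS⟩ z
    exact ⟨s, hsS, hsd ▸ hz⟩
  refine ⟨r, hr0, ?_⟩
  ext x
  simp only [Set.mem_setOf_eq]
  constructor
  · intro hx i
    show infDist (ziter f i x) S ≤ r
    rw [infDist_zero_of_mem (hziterS x hx i)]
    exact le_of_lt hr0
  · intro hx
    have hx' : ∀ i : ℤ, infDist (ziter f i x) S ≤ r := hx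
    obtain ⟨s0, hs0S, hs0⟩ := hnear x (by have := hx' 0; rwa [zit_zero] at this)
    have key : ∀ i : ℤ, dist (ziter f i x) (ziter f i s0) ≤ r := by
      intro i
      induction i using Int.induction_on with
      | zero => rw [zit_zero, zit_zero]; exact hs0
      | succ n ih =>
          have h1 : dist (f (ziter f n x)) (f (ziter f n s0)) ≤ m/2 :=
            H1 _ _ (le_trans ih hrδ1)
          obtain ⟨s, hsS, hs⟩ := hnear (ziter f ((n:ℤ)+1) x) (hx' _)
          have h2 : f (ziter f (n:ℤ) s0) ∈ S := hmaps _ (hziterS s0 hs0S n)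
          have h3 : dist s (f (ziter f (n:ℤ) s0)) < m := by
            have := dist_triangle s (ziter f ((n:ℤ)+1) x) (f (ziter f (n:ℤ) s0))
            rw [zit_succ] at this
            calc dist s (f (ziter f (n:ℤ) s0)) ≤ _ := this
            _ ≤ r + m/2 := by
                refine add_le_add ?_ h1
                rw [dist_comm, ← zit_succ]
                exact hs
            _ < m := by linarith
          have hseq : s = f (ziter f (n:ℤ) s0) := hsep s hsS _ h2 h3
          rw [zit_succ, zit_succ, ← hseq]
          rw [zit_succ] at hs
          exact hs
      | pred n ih =>
          have h1 : dist (f.symm (ziter f (-n:ℤ) x)) (f.symm (ziter f (-n:ℤ) s0)) ≤ m/2 :=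
            H2 _ _ (le_trans ih hrδ2)
          obtain ⟨s, hsS, hs⟩ := hnear (ziter f (-(n:ℤ)-1) x) (hx' _)
          have h2 : f.symm (ziter f (-n:ℤ) s0) ∈ S := hsymm _ (hziterS s0 hs0S _)
          have h3 : dist s (f.symm (ziter f (-n:ℤ) s0)) < m := by
            have := dist_triangle s (ziter f (-(n:ℤ)-1) x) (f.symm (ziter f (-n:ℤ) s0))
            rw [zit_pred] at this
            calc dist s (f.symm (ziter f (-n:ℤ) s0)) ≤ _ := this
            _ ≤ r + m/2 := by
                refine add_le_add ?_ h1
                rw [dist_comm, ← zit_pred]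
                exact hs
            _ < m := by linarith
          have hseq : s = f.symm (ziter f (-n:ℤ) s0) := hsep s hsS _ h2 h3
          rw [zit_pred, zit_pred, ← hseq]
          rw [zit_pred] at hs
          exact hs
    have hb1 : ∀ i : ℤ, ziter f i x ∈ nbd b S := fun i => le_trans (hx' i) hrb
    have hb2 : ∀ i : ℤ, ziter f i s0 ∈ nbd b S := by
      intro i
      show infDist (ziter f i s0) S ≤ b
      rw [infDist_zero_of_mem (hziterS s0 hs0S i)]
      exact le_of_lt hb
    have hd : ∀ i : ℤ, dist (ziter f i x) (ziter f i s0) ≤ e := fun i => le_trans (key i) hre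
    have := hexp x s0 hb1 hb2 hd
    rw [this]
    exact hs0S
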